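/- arXiv:1110.4324 — 4 statements merged into one kernel-verified Lean document; each statement's English description precedes it below -/
import Mathlib

section
/- Let F be a finite set of at least d+1 points in ℝ^d (d ≥ 2) and let C be a convex set in ℝ^d. Then there exists a translate of C covering F (i.e., there is t ∈ ℝ^d with F ⊆ t + C) if and only if every subset of F consisting of d+1 points can be covered by a translate of C. -/
/-- Helly-type translate covering theorem: a finite set `F` of at least `d + 1` points in
`ℝ^d` can be covered by a translate of a convex set `C` if and only if every `d + 1`
points of `F` can be covered by a translate of `C`. -/
theorem translate_covers_iff_every_d_add_one_points
    {d : ℕ} (hd : 2 ≤ d) (F : Finset (EuclideanSpace ℝ (Fin d))) (hF : d + 1 ≤ F.card)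
    (C : Set (EuclideanSpace ℝ (Fin d))) (hC : Convex ℝ C) :
    (∃ t : EuclideanSpace ℝ (Fin d), ∀ x ∈ F, x - t ∈ C) ↔
      ∀ G ⊆ F, G.card = d + 1 → ∃ t : EuclideanSpace ℝ (Fin d), ∀ x ∈ G, x - t ∈ C := by
  constructor
  · rintro ⟨t, ht⟩ G hG _
    exact ⟨t, fun x hx => ht x (hG hx)⟩
  · intro h
    have hrank : Module.finrank ℝ (EuclideanSpace ℝ (Fin d)) = d := by
      simp [finrank_euclideanSpace]
    set S : EuclideanSpace ℝ (Fin d) → Set (EuclideanSpace ℝ (Fin d)) :=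
      fun x => {t | x - t ∈ C} with hS
    have hconv : ∀ x ∈ F, Convex ℝ (S x) := by
      intro x _
      have : S x = (fun t => x - t) ⁻¹' C := rfl
      rw [this]
      intro a ha b hb p q hp hq hpq
      simp only [Set.mem_preimage] at *
      have : x - (p • a + q • b) = p • (x - a) + q • (x - b) := by
        have hx : p • x + q • x = x := by rw [← add_smul, hpq, one_smul]
        rw [smul_sub, smul_sub]
        rw [show p • x - p • a + (q • x - q • b) = (p • x + q • x) - (p • a + q • b) by abel, hx]
      rw [this]
      exact hC ha hb hp hq hpq
    have hinter : ∀ I ⊆ F, I.card = Module.finrank ℝ (EuclideanSpace ℝ (Fin d)) + 1 →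
        (⋂ i ∈ I, S i).Nonempty := by
      intro I hI hcard
      rw [hrank] at hcard
      obtain ⟨t, ht⟩ := h I hI hcard
      exact ⟨t, Set.mem_biInter fun x hx => ht x hx⟩
    have := Convex.helly_theorem (𝕜 := ℝ) (F := S) (s := F) (by rw [hrank]; exact hF) hconv hinter
    obtain ⟨t, ht⟩ := this
    exact ⟨t, fun x hx => (Set.mem_iInter₂.mp ht) x hx⟩
end

section
/- Let F = {f_1, f_2, …, f_n} be a finite set of points and C a convex body in ℝ^d, d ≥ 2. Then F cannot be translated into the interior of C if and only if there exist indices 1 ≤ i_1 < i_2 < … < i_s ≤ n, closed supporting halfspaces H⁺_{i_1}, …, H⁺_{i_s} of C, and a translation vector t ∈ ℝ^d such that: (i) for each j, the point t + f_{i_j} belongs to the closed halfspace H⁻_{i_j} whose boundary hyperplane coincides with that of H⁺_{i_j} and whose interior is disjoint from the interior of H⁺_{i_j}; and (ii) the intersection H⁺_{i_1} ∩ … ∩ H⁺_{i_s} is nearly bounded. -/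
open scoped RealInnerProductSpace

noncomputable section

/-- A set is nearly bounded if it lies between two parallel hyperplanes. -/
def NearlyBounded {d : ℕ} (S : Set (EuclideanSpace ℝ (Fin d))) : Prop :=
  ∃ u : EuclideanSpace ℝ (Fin d), ‖u‖ = 1 ∧ ∃ a b : ℝ,
    ∀ x ∈ S, a ≤ ⟪u, x⟫ ∧ ⟪u, x⟫ ≤ b

open Set Filter Finset

set_option maxHeartbeats 1000000


lemma sum_dite_embedding {ι : Type*} [Fintype ι] {N : ℕ} (e : ι ↪ Fin N)
    {M : Type*} [AddCommMonoid M] (G : ι → M) :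
    (∑ j, if h : ∃ i, e i = j then G h.choose else 0) = ∑ i, G i := by
  classical
  have hchoose : ∀ i : ι, (⟨i, rfl⟩ : ∃ i', e i' = e i).choose = i := fun i =>
    e.injective (⟨i, rfl⟩ : ∃ i', e i' = e i).choose_spec
  rw [← Finset.sum_subset (Finset.subset_univ (Finset.univ.image e))]
  · rw [Finset.sum_image (fun a _ b _ h => e.injective h)]
    apply Finset.sum_congr rfl
    intro i _
    rw [dif_pos ⟨i, rfl⟩, hchoose i]
  · intro j _ hj
    rw [dif_neg]
    rintro ⟨i, rfl⟩
    exact hj (Finset.mem_image_of_mem e (Finset.mem_univ i))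

lemma isCompact_convexHull_of_isCompact {E : Type*} [NormedAddCommGroup E] [NormedSpace ℝ E]
    [FiniteDimensional ℝ E] {V : Set E} (hV : IsCompact V) :
    IsCompact (convexHull ℝ V) := by
  classical
  rcases V.eq_empty_or_nonempty with rfl | ⟨v0, hv0⟩
  · simpa using isCompact_empty
  set N := Module.finrank ℝ E + 1 with hN
  set K : Set ((Fin N → ℝ) × (Fin N → E)) :=
    stdSimplex ℝ (Fin N) ×ˢ Set.univ.pi (fun _ => V) with hKdef
  have hKc : IsCompact K := (isCompact_stdSimplex ℝ (Fin N)).prod (isCompact_univ_pi fun _ => hV)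
  have hgc : Continuous (fun p : (Fin N → ℝ) × (Fin N → E) => ∑ i, p.1 i • p.2 i) := by
    apply continuous_finset_sum
    intro i _
    exact ((continuous_apply i).comp continuous_fst).smul ((continuous_apply i).comp continuous_snd)
  have himg : (fun p : (Fin N → ℝ) × (Fin N → E) => ∑ i, p.1 i • p.2 i) '' K = convexHull ℝ V := by
    apply Set.Subset.antisymm
    · rintro _ ⟨⟨w, z⟩, ⟨hw, hz⟩, rfl⟩
      exact (convex_convexHull ℝ V).sum_mem (fun i _ => hw.1 i) hw.2
        (fun i _ => subset_convexHull ℝ V (hz i (Set.mem_univ i)))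
    · intro x hx
      obtain ⟨ι, hι, z, w, hzV, haff, hwpos, hwsum, hcomb⟩ :=
        eq_pos_convex_span_of_mem_convexHull hx
      have hιne : Nonempty ι := by
        by_contra hempty
        rw [not_nonempty_iff] at hempty
        rw [Finset.sum_eq_zero (fun i _ => (hempty.false i).elim)] at hwsum
        norm_num at hwsum
      have hcard : Fintype.card ι ≤ N := by
        have h1 := haff.finrank_vectorSpan_add_one
        have h2 : Module.finrank ℝ (vectorSpan ℝ (Set.range z)) ≤ Module.finrank ℝ E :=
          Submodule.finrank_le _
        omega
      obtain ⟨e⟩ : Nonempty (ι ↪ Fin N) := by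
        apply Function.Embedding.nonempty_of_card_le
        simpa using hcard
      -- pad
      set w' : Fin N → ℝ := fun j => if h : ∃ i, e i = j then w h.choose else 0 with hw'
      set z' : Fin N → E := fun j => if h : ∃ i, e i = j then z h.choose else v0 with hz'
      refine ⟨(w', z'), ⟨⟨fun j => ?_, ?_⟩, fun j _ => ?_⟩, ?_⟩
      · simp only [hw']
        split_ifs with h
        · exact (hwpos _).le
        · exact le_refl 0
      · show (∑ j, w' j) = 1
        simp only [hw']
        rw [sum_dite_embedding e w, hwsum]
      · simp only [hz']
        split_ifs with h
        · exact hzV ⟨_, rfl⟩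
        · exact hv0
      · show (∑ j, w' j • z' j) = x
        rw [← hcomb, ← sum_dite_embedding e (fun i => w i • z i)]
        apply Finset.sum_congr rfl
        intro j _
        simp only [hw', hz']
        show _ = dite _ _ _
        split_ifs with h
        · rfl
        · exact zero_smul ℝ v0
  rw [← himg]
  exact hKc.image hgc

open scoped RealInnerProductSpace

variable {d : ℕ}

local notation "E" => EuclideanSpace ℝ (Fin d)

def sprt (C : Set (EuclideanSpace ℝ (Fin d))) (u : EuclideanSpace ℝ (Fin d)) : ℝ :=
  sSup ((fun x => ⟪u, x⟫) '' C)

lemma inner_cont (u : E) : Continuous (fun x : E => ⟪u, x⟫) :=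
  continuous_const.inner continuous_id

lemma inner_le_sprt {C : Set (EuclideanSpace ℝ (Fin d))} (hC : IsCompact C)
    {x u : E} (hx : x ∈ C) : ⟪u, x⟫ ≤ sprt C u :=
  le_csSup (hC.image (inner_cont u)).bddAbove ⟨x, hx, rfl⟩

lemma sprt_le {C : Set (EuclideanSpace ℝ (Fin d))} (hne : C.Nonempty) {u : E} {a : ℝ}
    (hb : ∀ x ∈ C, ⟪u, x⟫ ≤ a) : sprt C u ≤ a := by
  apply csSup_le (hne.image _)
  rintro _ ⟨x, hx, rfl⟩
  exact hb x hx

lemma sprt_cont {C : Set (EuclideanSpace ℝ (Fin d))} (hC : IsCompact C) (hne : C.Nonempty)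
    {R : ℝ} (hR : ∀ x ∈ C, ‖x‖ ≤ R) : Continuous (sprt C) := by
  have hR0 : 0 ≤ R := le_trans (norm_nonneg _) (hR _ hne.choose_spec)
  have key : ∀ u u' : E, sprt C u ≤ sprt C u' + R * ‖u - u'‖ := by
    intro u u'
    apply sprt_le hne
    intro x hx
    have h1 : ⟪u, x⟫ = ⟪u', x⟫ + ⟪u - u', x⟫ := by
      rw [← inner_add_left]; congr 1; abel
    have h2 : ⟪u - u', x⟫ ≤ ‖u - u'‖ * ‖x‖ := real_inner_le_norm _ _
    have h3 : ‖u - u'‖ * ‖x‖ ≤ R * ‖u - u'‖ := by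
      rw [mul_comm]
      exact mul_le_mul_of_nonneg_right (hR x hx) (norm_nonneg _)
    calc ⟪u, x⟫ = ⟪u', x⟫ + ⟪u - u', x⟫ := h1
      _ ≤ sprt C u' + R * ‖u - u'‖ := add_le_add (inner_le_sprt hC hx) (h2.trans h3)
  have : LipschitzWith ⟨R, hR0⟩ (sprt C) := by
    apply LipschitzWith.of_dist_le_mul
    intro u u'
    rw [Real.dist_eq, abs_sub_le_iff]
    change _ ≤ R * dist u u' ∧ _ ≤ R * dist u u'
    constructor
    · have := key u u'
      rw [dist_eq_norm]
      linarith
    · have := key u' u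
      rw [dist_eq_norm, ← norm_neg, neg_sub]
      linarith
  exact this.continuous

lemma backward_dir {n : ℕ} (f : Fin n → E) (C : Set (EuclideanSpace ℝ (Fin d)))
    {s : ℕ} {idx : Fin s → Fin n} {v : Fin s → EuclideanSpace ℝ (Fin d)}
    {c : Fin s → ℝ} {t : EuclideanSpace ℝ (Fin d)}
    (hs : 1 ≤ s)
    (hvne : ∀ j, v j ≠ 0)
    (hsupp : ∀ j, ∀ x ∈ C, c j ≤ ⟪v j, x⟫)
    (htouch : ∀ j, ∃ x ∈ C, ⟪v j, x⟫ = c j)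
    (hbelow : ∀ j, ⟪v j, t + f (idx j)⟫ ≤ c j)
    (hnb : NearlyBounded (⋂ j, {x : EuclideanSpace ℝ (Fin d) | c j ≤ ⟪v j, x⟫})) :
    ¬ ∃ t' : EuclideanSpace ℝ (Fin d), ∀ i : Fin n, t' + f i ∈ interior C := by
  rintro ⟨t', ht'⟩
  haveI : NeZero s := ⟨by omega⟩
  set w : E := t' - t with hw
  -- each dj > 0
  have hdj : ∀ j, 0 < ⟪v j, w⟫ := by
    intro j
    have hy : t' + f (idx j) ∈ interior C := ht' (idx j)
    rw [mem_interior_iff_mem_nhds, Metric.mem_nhds_iff] at hy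
    obtain ⟨ρ, hρ, hball⟩ := hy
    set y := t' + f (idx j) with hy'
    have hvpos : 0 < ‖v j‖ := norm_pos_iff.mpr (hvne j)
    have hmem : y - (ρ/2) • (‖v j‖⁻¹ • v j) ∈ C := by
      apply hball
      rw [Metric.mem_ball, dist_eq_norm]
      have : y - (ρ/2) • (‖v j‖⁻¹ • v j) - y = -((ρ/2) • (‖v j‖⁻¹ • v j)) := by abel
      rw [this, norm_neg, norm_smul, norm_smul, norm_inv, norm_norm, Real.norm_eq_abs,
        inv_mul_cancel₀ (ne_of_gt hvpos), mul_one, abs_of_pos (by linarith : (0:ℝ) < ρ/2)]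
      linarith
    have h1 : c j ≤ ⟪v j, y⟫ - (ρ/2) * ‖v j‖ := by
      have := hsupp j _ hmem
      rw [inner_sub_right, inner_smul_right, inner_smul_right,
        real_inner_self_eq_norm_mul_norm] at this
      have hsimp : ‖v j‖⁻¹ * (‖v j‖ * ‖v j‖) = ‖v j‖ := by
        field_simp
      rw [hsimp] at this
      exact this
    have h2 : ⟪v j, t + f (idx j)⟫ ≤ c j := hbelow j
    have h3 : ⟪v j, w⟫ = ⟪v j, y⟫ - ⟪v j, t + f (idx j)⟫ := by
      rw [← inner_sub_right]
      congr 1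
      rw [hw, hy']
      abel
    have h4 : 0 < (ρ/2) * ‖v j‖ := mul_pos (by linarith) hvpos
    linarith
  obtain ⟨u, hu1, a, b, hab⟩ := hnb
  -- a base point in C
  obtain ⟨xb, hxb, -⟩ := htouch 0
  have hxbK : ∀ j, c j ≤ ⟪v j, xb⟫ := fun j => hsupp j xb hxb
  -- epsilon
  have hFinne : (Finset.univ : Finset (Fin s)).Nonempty := Finset.univ_nonempty
  set ε : ℝ := Finset.univ.inf' hFinne (fun j => ⟪v j, w⟫ / (‖v j‖ + 1)) with hε
  have hεpos : 0 < ε := by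
    rw [hε]
    exact (Finset.lt_inf'_iff hFinne).mpr (fun j _ => div_pos (hdj j) (by positivity))
  have hεle : ∀ j, ε * (‖v j‖ + 1) ≤ ⟪v j, w⟫ := by
    intro j
    have h1 : ε ≤ ⟪v j, w⟫ / (‖v j‖ + 1) := Finset.inf'_le _ (Finset.mem_univ j)
    have h2 : (0:ℝ) < ‖v j‖ + 1 := by positivity
    calc ε * (‖v j‖ + 1) ≤ (⟪v j, w⟫ / (‖v j‖ + 1)) * (‖v j‖ + 1) :=
          mul_le_mul_of_nonneg_right h1 (le_of_lt h2)
      _ = ⟪v j, w⟫ := by field_simp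
  -- claim 1 : ⟪u, w⟫ ≥ 0
  have hray1 : ∀ lam : ℝ, 0 ≤ lam → a ≤ ⟪u, xb⟫ + lam * ⟪u, w⟫ := by
    intro lam hlam
    have hmem : xb + lam • w ∈ ⋂ j, {x : EuclideanSpace ℝ (Fin d) | c j ≤ ⟪v j, x⟫} := by
      apply Set.mem_iInter.mpr
      intro j
      show c j ≤ ⟪v j, xb + lam • w⟫
      rw [inner_add_right, inner_smul_right]
      have : 0 ≤ lam * ⟪v j, w⟫ := mul_nonneg hlam (le_of_lt (hdj j))
      linarith [hxbK j]
    have := (hab _ hmem).1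
    rwa [inner_add_right, inner_smul_right] at this
  have huw : 0 ≤ ⟪u, w⟫ := by
    by_contra hneg
    push_neg at hneg
    set lam := (⟪u, xb⟫ - a + 1) / (-⟪u, w⟫) with hlam
    have hnum : 0 ≤ ⟪u, xb⟫ - a := by linarith [hray1 0 le_rfl]
    have hlamnn : 0 ≤ lam := div_nonneg (by linarith) (by linarith)
    have := hray1 lam hlamnn
    rw [hlam] at this
    have hBpos : 0 < -⟪u, w⟫ := by linarith
    have hval : (⟪u, xb⟫ - a + 1) / (-⟪u, w⟫) * ⟪u, w⟫ = -(⟪u, xb⟫ - a + 1) := by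
      have h2 : (⟪u, xb⟫ - a + 1) / (-⟪u, w⟫) * (-⟪u, w⟫) = ⟪u, xb⟫ - a + 1 :=
        div_mul_cancel₀ _ (ne_of_gt hBpos)
      nlinarith [h2]
    rw [hval] at this
    linarith
  -- claim 2 : ray in direction w + ε u stays in K
  have hray2 : ∀ lam : ℝ, 0 ≤ lam → ⟪u, xb⟫ + lam * (⟪u, w⟫ + ε) ≤ b := by
    intro lam hlam
    have hmem : xb + lam • (w + ε • u) ∈ ⋂ j, {x : EuclideanSpace ℝ (Fin d) | c j ≤ ⟪v j, x⟫} := by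
      apply Set.mem_iInter.mpr
      intro j
      show c j ≤ ⟪v j, xb + lam • (w + ε • u)⟫
      rw [inner_add_right, inner_smul_right, inner_add_right, inner_smul_right]
      have habs : |⟪v j, u⟫| ≤ ‖v j‖ := by
        have := abs_real_inner_le_norm (v j) u
        rwa [hu1, mul_one] at this
      have h0 : 0 ≤ ε * (⟪v j, u⟫ + ‖v j‖) :=
        mul_nonneg hεpos.le (by linarith [(abs_le.mp habs).1])
      have h1 : -(ε * ‖v j‖) ≤ ε * ⟪v j, u⟫ := by nlinarith [h0]
      have h2 : ε * ‖v j‖ ≤ ⟪v j, w⟫ - ε := by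
        have := hεle j
        nlinarith
      have h3 : 0 ≤ ⟪v j, w⟫ + ε * ⟪v j, u⟫ := by nlinarith [hεpos]
      nlinarith [hxbK j, mul_nonneg hlam h3]
    have := (hab _ hmem).2
    rw [inner_add_right, inner_smul_right, inner_add_right, inner_smul_right,
      real_inner_self_eq_norm_mul_norm, hu1] at this
    calc ⟪u, xb⟫ + lam * (⟪u, w⟫ + ε) = ⟪u, xb⟫ + lam * (⟪u, w⟫ + ε * (1*1)) := by ring
      _ ≤ b := this
  -- contradiction
  set lam := (b - ⟪u, xb⟫ + 1) / (⟪u, w⟫ + ε) with hlam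
  have hpos : 0 < ⟪u, w⟫ + ε := by linarith
  have hnum : 0 ≤ b - ⟪u, xb⟫ := by linarith [hray2 0 le_rfl]
  have hlamnn : 0 ≤ lam := div_nonneg (by linarith) (le_of_lt hpos)
  have := hray2 lam hlamnn
  rw [hlam] at this
  have hval : (b - ⟪u, xb⟫ + 1) / (⟪u, w⟫ + ε) * (⟪u, w⟫ + ε) = b - ⟪u, xb⟫ + 1 :=
    div_mul_cancel₀ _ (ne_of_gt hpos)
  rw [hval] at this
  linarith

lemma forward_dir {n : ℕ} (hd : 2 ≤ d) (hn : 1 ≤ n) (f : Fin n → EuclideanSpace ℝ (Fin d))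
    (C : Set (EuclideanSpace ℝ (Fin d)))
    (hCc : IsCompact C) (hCconv : Convex ℝ C) (hCint : (interior C).Nonempty)
    (H : ¬ ∃ t : EuclideanSpace ℝ (Fin d), ∀ i : Fin n, t + f i ∈ interior C) :
    ∃ (s : ℕ) (idx : Fin s → Fin n) (v : Fin s → EuclideanSpace ℝ (Fin d))
      (c : Fin s → ℝ) (t : EuclideanSpace ℝ (Fin d)),
      1 ≤ s ∧ StrictMono idx ∧
      (∀ j, v j ≠ 0) ∧
      (∀ j, ∀ x ∈ C, c j ≤ ⟪v j, x⟫) ∧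
      (∀ j, ∃ x ∈ C, ⟪v j, x⟫ = c j) ∧
      (∀ j, ⟪v j, t + f (idx j)⟫ ≤ c j) ∧
      NearlyBounded (⋂ j, {x : EuclideanSpace ℝ (Fin d) | c j ≤ ⟪v j, x⟫}) := by
  classical
  haveI hntE : Nontrivial (EuclideanSpace ℝ (Fin d)) := by
    apply Module.nontrivial_of_finrank_pos (R := ℝ)
    rw [finrank_euclideanSpace_fin]
    omega
  -- basic data
  obtain ⟨x0, hx0⟩ := hCint
  have hx0C : x0 ∈ C := interior_subset hx0
  have hCne : C.Nonempty := ⟨x0, hx0C⟩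
  obtain ⟨δ2, hδ2, hball⟩ := Metric.mem_nhds_iff.mp (mem_interior_iff_mem_nhds.mp hx0)
  set δ : ℝ := δ2 / 2 with hδdef
  have hδ : 0 < δ := by rw [hδdef]; linarith
  have hδC : Metric.closedBall x0 δ ⊆ C :=
    (Metric.closedBall_subset_ball (by rw [hδdef]; linarith)).trans hball
  obtain ⟨R, hR⟩ := hCc.isBounded.exists_norm_le
  have hR0 : 0 ≤ R := le_trans (norm_nonneg x0) (hR x0 hx0C)
  obtain ⟨u1, hu1⟩ := exists_norm_eq (EuclideanSpace ℝ (Fin d)) zero_le_one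
  set h : E → ℝ := sprt C with hh
  have hhc : Continuous h := sprt_cont hCc hCne hR
  have hhle : ∀ u : E, ‖u‖ = 1 → h u ≤ R := by
    intro u hu
    apply sprt_le hCne
    intro x hx
    calc ⟪u, x⟫ ≤ ‖u‖ * ‖x‖ := real_inner_le_norm u x
      _ = ‖x‖ := by rw [hu, one_mul]
      _ ≤ R := hR x hx
  have hhδ : ∀ u : E, ‖u‖ = 1 → ⟪u, x0⟫ + δ ≤ h u := by
    intro u hu
    have hmem : x0 + δ • u ∈ C := by
      apply hδC
      rw [Metric.mem_closedBall, dist_eq_norm, add_sub_cancel_left, norm_smul,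
        Real.norm_eq_abs, abs_of_pos hδ, hu, mul_one]
    have := inner_le_sprt hCc hmem (u := u)
    rwa [inner_add_right, inner_smul_right, real_inner_self_eq_norm_mul_norm, hu,
      one_mul, mul_one] at this
  -- the sup structure
  set i0 : Fin n := ⟨0, by omega⟩ with hi0
  set K : Set (Fin n × EuclideanSpace ℝ (Fin d)) :=
    (Set.univ : Set (Fin n)) ×ˢ (Metric.sphere (0:EuclideanSpace ℝ (Fin d)) 1) with hK
  have hKc : IsCompact K := (Set.toFinite _).isCompact.prod (isCompact_sphere 0 1)
  have hKne : K.Nonempty := ⟨(i0, u1), Set.mem_univ _, by rwa [mem_sphere_zero_iff_norm]⟩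
  have hKnorm : ∀ p ∈ K, ‖p.2‖ = 1 := by
    rintro p ⟨-, hp2⟩
    rwa [mem_sphere_zero_iff_norm] at hp2
  set g : E → (Fin n × EuclideanSpace ℝ (Fin d)) → ℝ :=
    fun t p => ⟪p.2, t + f p.1⟫ - h p.2 with hg
  have hgc : ∀ t, Continuous (g t) := by
    intro t
    apply Continuous.sub
    · exact continuous_snd.inner
        ((continuous_of_discreteTopology (f := fun i : Fin n => t + f i)).comp continuous_fst)
    · exact hhc.comp continuous_snd
  set Φ : E → ℝ := fun t => sSup (g t '' K) with hΦ
  have himgc : ∀ t, IsCompact (g t '' K) := fun t => hKc.image (hgc t)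
  have hΦmem : ∀ t, Φ t ∈ g t '' K := fun t => (himgc t).sSup_mem (hKne.image _)
  have hΦle : ∀ t, ∀ p ∈ K, g t p ≤ Φ t := fun t p hp =>
    le_csSup (himgc t).bddAbove ⟨p, hp, rfl⟩
  -- Lipschitz
  have hlip : ∀ t t' : E, Φ t ≤ Φ t' + ‖t - t'‖ := by
    intro t t'
    obtain ⟨p, hp, hval⟩ := hΦmem t
    have h1 : g t p = g t' p + ⟪p.2, t - t'⟫ := by
      rw [hg]
      simp only
      rw [show t + f p.1 = (t' + f p.1) + (t - t') by abel, inner_add_right]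
      ring
    have h2 : ⟪p.2, t - t'⟫ ≤ ‖t - t'‖ := by
      have := real_inner_le_norm p.2 (t - t')
      rwa [hKnorm p hp, one_mul] at this
    rw [← hval, h1]
    have := hΦle t' p hp
    linarith
  have hΦcont : Continuous Φ := by
    have : LipschitzWith 1 Φ := by
      apply LipschitzWith.of_dist_le_mul
      intro t t'
      rw [Real.dist_eq, abs_sub_le_iff, NNReal.coe_one, one_mul, dist_eq_norm]
      constructor
      · linarith [hlip t t']
      · rw [← norm_neg, neg_sub]
        linarith [hlip t' t]
    exact this.continuous
  -- coercive
  have hcoer : ∀ t : E, ‖t‖ - ‖f i0‖ - R ≤ Φ t := by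
    intro t
    by_cases hz : t + f i0 = 0
    · have h1 : g t (i0, u1) = ⟪u1, (0:E)⟫ - h u1 := by rw [hg]; simp only; rw [hz]
      have h2 : Φ t ≥ -R := by
        have := hΦle t (i0, u1) ⟨Set.mem_univ _, by rwa [mem_sphere_zero_iff_norm]⟩
        rw [h1, inner_zero_right, zero_sub] at this
        linarith [hhle u1 hu1]
      have h3 : ‖t‖ ≤ ‖f i0‖ := by
        have : t = -f i0 := by rw [← add_eq_zero_iff_eq_neg]; exact hz
        rw [this, norm_neg]
      linarith
    · set x := t + f i0 with hx
      have hxpos : 0 < ‖x‖ := norm_pos_iff.mpr hz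
      set u : E := ‖x‖⁻¹ • x with hu
      have hun : ‖u‖ = 1 := by
        rw [hu, norm_smul, norm_inv, norm_norm, inv_mul_cancel₀ (ne_of_gt hxpos)]
      have h1 : g t (i0, u) = ‖x‖ - h u := by
        rw [hg]
        simp only
        rw [← hx, hu, real_inner_smul_left, real_inner_self_eq_norm_mul_norm]
        rw [show ‖x‖⁻¹ * (‖x‖ * ‖x‖) = ‖x‖ by field_simp]
      have h2 := hΦle t (i0, u) ⟨Set.mem_univ _, by rwa [mem_sphere_zero_iff_norm]⟩
      have h3 : ‖t‖ - ‖f i0‖ ≤ ‖x‖ := by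
        rw [hx]
        have := norm_sub_norm_le t (-(f i0))
        rwa [norm_neg, sub_neg_eq_add] at this
      rw [h1] at h2
      linarith [hhle u hun]
  -- minimizer
  have htend : Filter.Tendsto Φ (Filter.cocompact (EuclideanSpace ℝ (Fin d))) Filter.atTop := by
    apply Filter.tendsto_atTop_mono hcoer
    have h1 : Filter.Tendsto (fun t : E => ‖t‖ - ‖f i0‖ - R)
        (Filter.cocompact (EuclideanSpace ℝ (Fin d))) Filter.atTop := by
      apply Filter.tendsto_atTop_add_const_right _ (-R)
      apply Filter.tendsto_atTop_add_const_right _ (-‖f i0‖)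
      exact tendsto_norm_cocompact_atTop
    simpa [sub_eq_add_neg] using h1
  obtain ⟨ts, hts⟩ := hΦcont.exists_forall_le htend
  set μ : ℝ := Φ ts with hμ
  -- nonnegativity of the minimum
  have hlt : ∀ t : E, Φ t < 0 → ∀ i : Fin n, t + f i ∈ interior C := by
    intro t ht i
    rw [mem_interior]
    refine ⟨Metric.ball (t + f i) (-Φ t), ?_, Metric.isOpen_ball,
      Metric.mem_ball_self (by linarith)⟩
    intro y hy
    by_contra hyC
    obtain ⟨φ, a, haC, hay⟩ := geometric_hahn_banach_closed_point hCconv hCc.isClosed hyC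
    set w : E := (InnerProductSpace.toDual ℝ (EuclideanSpace ℝ (Fin d))).symm φ with hwdef
    have hwx : ∀ x : E, ⟪w, x⟫ = φ x := fun x => InnerProductSpace.toDual_symm_apply
    have hwne : w ≠ 0 := by
      intro hw0
      have h1 := haC x0 hx0C
      have h2 : φ x0 = 0 := by rw [← hwx, hw0, inner_zero_left]
      have h3 : φ y = 0 := by rw [← hwx, hw0, inner_zero_left]
      linarith
    have hwpos : 0 < ‖w‖ := norm_pos_iff.mpr hwne
    set u : E := ‖w‖⁻¹ • w with hu
    have hun : ‖u‖ = 1 := by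
      rw [hu, norm_smul, norm_inv, norm_norm, inv_mul_cancel₀ (ne_of_gt hwpos)]
    have hhu : h u ≤ ‖w‖⁻¹ * a := by
      apply sprt_le hCne
      intro x hx
      rw [hu, real_inner_smul_left, hwx]
      exact mul_le_mul_of_nonneg_left (haC x hx).le (inv_nonneg.mpr hwpos.le)
    have huy : ‖w‖⁻¹ * a < ⟪u, y⟫ := by
      rw [hu, real_inner_smul_left, hwx]
      exact (mul_lt_mul_iff_right₀ (inv_pos.mpr hwpos)).mpr hay
    have hg1 : ⟪u, t + f i⟫ - h u ≤ Φ t :=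
      hΦle t (i, u) ⟨Set.mem_univ _, by rwa [mem_sphere_zero_iff_norm]⟩
    have hg2 : ⟪u, y⟫ ≤ ⟪u, t + f i⟫ + ‖y - (t + f i)‖ := by
      have h1 : ⟪u, y⟫ = ⟪u, t + f i⟫ + ⟪u, y - (t + f i)⟫ := by
        rw [← inner_add_right]
        congr 1
        abel
      have h2 : ⟪u, y - (t + f i)⟫ ≤ ‖y - (t + f i)‖ := by
        have := real_inner_le_norm u (y - (t + f i))
        rwa [hun, one_mul] at this
      linarith
    have hg3 : ‖y - (t + f i)‖ < -Φ t := by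
      rw [← dist_eq_norm]
      exact Metric.mem_ball.mp hy
    linarith
  have hμ0 : 0 ≤ μ := by
    by_contra hneg
    push_neg at hneg
    exact H ⟨ts, hlt ts hneg⟩
  -- active set
  set A : Set (Fin n × EuclideanSpace ℝ (Fin d)) := {p ∈ K | g ts p = μ} with hA
  have hAc : IsCompact A := by
    have : A = K ∩ (g ts) ⁻¹' {μ} := by
      ext p; simp [hA, Set.mem_sep_iff]
    rw [this]
    exact hKc.inter_right ((isClosed_singleton).preimage (hgc ts))
  have hAne : A.Nonempty := by
    obtain ⟨p, hp, hval⟩ := hΦmem ts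
    exact ⟨p, hp, hval⟩
  set V : Set (EuclideanSpace ℝ (Fin d)) := Prod.snd '' A with hV
  have hVc : IsCompact V := hAc.image continuous_snd
  have hVne : V.Nonempty := hAne.image _
  -- Danskin: 0 in convex hull of active normals
  have hzero : (0 : EuclideanSpace ℝ (Fin d)) ∈ convexHull ℝ V := by
    by_contra h0
    have hhullc : IsCompact (convexHull ℝ V) := isCompact_convexHull_of_isCompact hVc
    obtain ⟨φ, a, h0a, haV⟩ :=
      geometric_hahn_banach_point_closed (convex_convexHull ℝ V) hhullc.isClosed h0
    set w : E := (InnerProductSpace.toDual ℝ (EuclideanSpace ℝ (Fin d))).symm φ with hwdef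
    have hwx : ∀ x : E, ⟪w, x⟫ = φ x := fun x => InnerProductSpace.toDual_symm_apply
    have hφ0 : φ 0 = 0 := map_zero φ
    have hapos : 0 < a := by rw [hφ0] at h0a; exact h0a
    have haV' : ∀ u ∈ V, a < ⟪w, u⟫ := by
      intro u hu
      rw [hwx]
      exact haV u (subset_convexHull ℝ V hu)
    have hwnorm : a < ‖w‖ := by
      obtain ⟨u, hu⟩ := hVne
      have h1 := haV' u hu
      have h2 : ⟪w, u⟫ ≤ ‖w‖ := by
        have h3 := real_inner_le_norm w u
        have h4 : ‖u‖ = 1 := by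
          obtain ⟨p, hpA, hpu⟩ := hu
          rw [← hpu]
          exact hKnorm p hpA.1
        rw [h4, mul_one] at h3
        exact h3
      linarith
    have hwpos : 0 < ‖w‖ := lt_trans hapos hwnorm
    -- the compact "far" set
    set K₂ : Set (Fin n × EuclideanSpace ℝ (Fin d)) := {p ∈ K | ⟪w, p.2⟫ ≤ a/2} with hK₂
    have hK₂c : IsCompact K₂ := by
      have : K₂ = K ∩ (fun p : Fin n × EuclideanSpace ℝ (Fin d) => ⟪w, p.2⟫) ⁻¹' (Set.Iic (a/2)) := by
        ext p; simp [hK₂, Set.mem_sep_iff]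
      rw [this]
      exact hKc.inter_right (isClosed_Iic.preimage ((inner_cont w).comp continuous_snd))
    have hK₂ne : K₂.Nonempty := by
      refine ⟨(i0, -(‖w‖⁻¹ • w)), ⟨Set.mem_univ _, ?_⟩, ?_⟩
      · rw [mem_sphere_zero_iff_norm, norm_neg, norm_smul, norm_inv, norm_norm,
          inv_mul_cancel₀ (ne_of_gt hwpos)]
      · show ⟪w, -(‖w‖⁻¹ • w)⟫ ≤ a/2
        rw [inner_neg_right, real_inner_smul_right, real_inner_self_eq_norm_mul_norm]
        have : 0 < ‖w‖⁻¹ * (‖w‖ * ‖w‖) := by positivity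
        linarith
    obtain ⟨q, hqK₂, hqmax⟩ := hK₂c.exists_isMaxOn hK₂ne ((hgc ts).continuousOn)
    have hq1 : g ts q < μ := by
      rcases lt_or_eq_of_le (hΦle ts q hqK₂.1) with hlt' | heq
      · exact hlt'
      · exfalso
        have hqA : q ∈ A := ⟨hqK₂.1, heq⟩
        have hq2V : q.2 ∈ V := ⟨q, hqA, rfl⟩
        have := haV' q.2 hq2V
        have := hqK₂.2
        linarith
    set γ : ℝ := μ - g ts q with hγ
    have hγpos : 0 < γ := by rw [hγ]; linarith
    set θ : ℝ := min (γ / (‖w‖ + 1)) 1 with hθ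
    have hθpos : 0 < θ := lt_min (div_pos hγpos (by positivity)) one_pos
    have hθγ : θ * ‖w‖ < γ := by
      have h1 : θ ≤ γ / (‖w‖ + 1) := min_le_left _ _
      have h2 : θ * (‖w‖ + 1) ≤ γ := by
        calc θ * (‖w‖ + 1) ≤ (γ / (‖w‖ + 1)) * (‖w‖ + 1) :=
              mul_le_mul_of_nonneg_right h1 (by positivity)
          _ = γ := div_mul_cancel₀ _ (by positivity)
      nlinarith
    -- evaluate Φ at the shifted point
    have hshift : ∀ p : Fin n × EuclideanSpace ℝ (Fin d),
        g (ts - θ • w) p = g ts p - θ * ⟪w, p.2⟫ := by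
      intro p
      rw [hg]
      simp only
      rw [show ts - θ • w + f p.1 = (ts + f p.1) + (-(θ • w)) by abel, inner_add_right,
        inner_neg_right, real_inner_smul_right, real_inner_comm p.2 w]
      ring
    have hΦlt : Φ (ts - θ • w) < μ := by
      obtain ⟨p, hpK, hval⟩ := hΦmem (ts - θ • w)
      rw [← hval, hshift p]
      by_cases hp2 : ⟪w, p.2⟫ ≤ a/2
      · have hpK₂ : p ∈ K₂ := ⟨hpK, hp2⟩
        have h1 : g ts p ≤ μ - γ := by
          have := hqmax hpK₂
          rw [hγ]
          simp only [Set.mem_setOf_eq] at this ⊢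
          linarith [this]
        have h2 : -‖w‖ ≤ ⟪w, p.2⟫ := by
          have h3 := abs_real_inner_le_norm w p.2
          rw [hKnorm p hpK, mul_one] at h3
          linarith [(abs_le.mp h3).1]
        nlinarith [hθpos]
      · push_neg at hp2
        have h1 : g ts p ≤ μ := hΦle ts p hpK
        nlinarith [hθpos, hapos]
    exact absurd (hts (ts - θ • w)) (by linarith)
  -- Caratheodory decomposition
  obtain ⟨ι, hι, z, lam, hzV, haff, hlampos, hlamsum, hcomb⟩ :=
    eq_pos_convex_span_of_mem_convexHull hzero
  haveI hιne : Nonempty ι := by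
    by_contra hempty
    rw [not_nonempty_iff] at hempty
    rw [Finset.sum_eq_zero (fun i _ => (hempty.false i).elim)] at hlamsum
    norm_num at hlamsum
  have hmemA : ∀ k : ι, ∃ i : Fin n, ‖z k‖ = 1 ∧ ⟪z k, ts + f i⟫ - h (z k) = μ := by
    intro k
    obtain ⟨p, hpA, hp2⟩ := hzV (Set.mem_range_self k)
    refine ⟨p.1, ?_, ?_⟩
    · rw [← hp2]; exact hKnorm p hpA.1
    · have hval := hpA.2
      rw [hg] at hval
      simp only at hval
      rw [← hp2]
      exact hval
  choose idx0 hnorm1 hact using hmemA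
  set T : Finset (Fin n) := Finset.image idx0 Finset.univ with hT
  set W : Fin n → EuclideanSpace ℝ (Fin d) :=
    fun i => ∑ k ∈ Finset.univ.filter (fun k => idx0 k = i), lam k • z k with hWdef
  have hWsum : ∑ i ∈ T, W i = 0 := by
    rw [hWdef, Finset.sum_fiberwise_of_maps_to
      (fun k _ => Finset.mem_image_of_mem idx0 (Finset.mem_univ k)) (fun k => lam k • z k)]
    exact hcomb
  -- per-index facts
  have hkey : ∀ i ∈ T, (∀ x ∈ C, ⟪W i, x⟫ ≤ ⟪W i, ts + f i⟫) ∧ W i ≠ 0 := by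
    intro i hiT
    set Fk := Finset.univ.filter (fun k => idx0 k = i) with hFk
    have hFne : Fk.Nonempty := by
      obtain ⟨k0, -, hk0⟩ := Finset.mem_image.mp hiT
      exact ⟨k0, Finset.mem_filter.mpr ⟨Finset.mem_univ k0, hk0⟩⟩
    have hLpos : 0 < ∑ k ∈ Fk, lam k := Finset.sum_pos (fun k _ => hlampos k) hFne
    have hinner : ∀ x : EuclideanSpace ℝ (Fin d), ⟪W i, x⟫ = ∑ k ∈ Fk, lam k * ⟪z k, x⟫ := by
      intro x
      rw [hWdef]
      rw [sum_inner]
      apply Finset.sum_congr rfl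
      intro k _
      rw [real_inner_smul_left]
    have hCle : ∀ x ∈ C, ⟪W i, x⟫ ≤ ∑ k ∈ Fk, lam k * h (z k) := by
      intro x hx
      rw [hinner]
      apply Finset.sum_le_sum
      intro k _
      exact mul_le_mul_of_nonneg_left (inner_le_sprt hCc hx) (hlampos k).le
    have hmid : ∑ k ∈ Fk, lam k * h (z k) ≤ ⟪W i, ts + f i⟫ := by
      rw [hinner]
      apply Finset.sum_le_sum
      intro k hk
      have hki : idx0 k = i := (Finset.mem_filter.mp hk).2
      have := hact k
      rw [hki] at this
      have h1 : ⟪z k, ts + f i⟫ = h (z k) + μ := by linarith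
      apply mul_le_mul_of_nonneg_left _ (hlampos k).le
      linarith
    have hx0le : ⟪W i, x0⟫ + δ * (∑ k ∈ Fk, lam k) ≤ ∑ k ∈ Fk, lam k * h (z k) := by
      have h1 : ∀ k ∈ Fk, lam k * (⟪z k, x0⟫ + δ) ≤ lam k * h (z k) := fun k _ =>
        mul_le_mul_of_nonneg_left (hhδ (z k) (hnorm1 k)) (hlampos k).le
      have h2 : ∑ k ∈ Fk, lam k * (⟪z k, x0⟫ + δ) = ⟪W i, x0⟫ + δ * (∑ k ∈ Fk, lam k) := by
        rw [hinner, Finset.mul_sum, ← Finset.sum_add_distrib]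
        apply Finset.sum_congr rfl
        intro k _
        ring
      calc ⟪W i, x0⟫ + δ * (∑ k ∈ Fk, lam k) = ∑ k ∈ Fk, lam k * (⟪z k, x0⟫ + δ) := h2.symm
        _ ≤ ∑ k ∈ Fk, lam k * h (z k) := Finset.sum_le_sum h1
    constructor
    · intro x hx
      exact le_trans (hCle x hx) hmid
    · intro h0
      rw [h0] at hx0le hmid
      rw [inner_zero_left] at hx0le hmid
      nlinarith [hLpos, hδ]
  -- assemble the answer
  have hTne : T.Nonempty := by
    obtain ⟨k0⟩ := hιne
    exact ⟨idx0 k0, Finset.mem_image_of_mem idx0 (Finset.mem_univ k0)⟩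
  have hs1 : 1 ≤ T.card := Finset.card_pos.mpr hTne
  set e := T.orderIsoOfFin rfl with he
  set idx : Fin T.card → Fin n := fun j => (e j : Fin n) with hidx
  have hidxT : ∀ j, idx j ∈ T := fun j => (e j).2
  set v : Fin T.card → EuclideanSpace ℝ (Fin d) := fun j => -W (idx j) with hv
  set c : Fin T.card → ℝ := fun j => sInf ((fun x => ⟪v j, x⟫) '' C) with hc
  have himg2 : ∀ j, IsCompact ((fun x => ⟪v j, x⟫) '' C) := fun j => hCc.image (inner_cont _)
  have himg2ne : ∀ j, ((fun x => ⟪v j, x⟫) '' C).Nonempty := fun j => hCne.image _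
  refine ⟨T.card, idx, v, c, ts, hs1, ?_, ?_, ?_, ?_, ?_, ?_⟩
  · -- strict mono
    intro a b hab
    exact Subtype.coe_lt_coe.mpr (e.strictMono hab)
  · -- nonzero
    intro j
    rw [hv]
    exact neg_ne_zero.mpr (hkey (idx j) (hidxT j)).2
  · -- supporting
    intro j x hx
    exact csInf_le (himg2 j).bddBelow ⟨x, hx, rfl⟩
  · -- touching
    intro j
    have := (himg2 j).sInf_mem (himg2ne j)
    obtain ⟨x, hx, hval⟩ := this
    exact ⟨x, hx, hval⟩
  · -- translated point in complementary halfspace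
    intro j
    apply le_csInf (himg2ne j)
    rintro b ⟨x, hx, rfl⟩
    simp only [hv, inner_neg_left, neg_le_neg_iff]
    exact (hkey (idx j) (hidxT j)).1 x hx
  · -- nearly bounded
    haveI : NeZero T.card := ⟨by omega⟩
    set j0 : Fin T.card := 0 with hj0
    have hWne : W (idx j0) ≠ 0 := (hkey (idx j0) (hidxT j0)).2
    have hWpos : 0 < ‖W (idx j0)‖ := norm_pos_iff.mpr hWne
    refine ⟨‖W (idx j0)‖⁻¹ • W (idx j0), ?_, ‖W (idx j0)‖⁻¹ * (∑ j ∈ Finset.univ.erase j0, c j),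
      ‖W (idx j0)‖⁻¹ * (-(c j0)), ?_⟩
    · rw [norm_smul, norm_inv, norm_norm, inv_mul_cancel₀ (ne_of_gt hWpos)]
    · intro x hx
      have hj : ∀ j, ⟪W (idx j), x⟫ ≤ -(c j) := by
        intro j
        have := Set.mem_iInter.mp hx j
        have h1 : c j ≤ ⟪v j, x⟫ := this
        rw [hv, inner_neg_left] at h1
        linarith
      have hsum0 : ∑ j, ⟪W (idx j), x⟫ = 0 := by
        rw [← sum_inner]
        have h1 : ∑ j, W (idx j) = ∑ i ∈ T, W i := by
          rw [← Finset.sum_coe_sort T (fun i => W i)]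
          exact Fintype.sum_equiv e.toEquiv (fun j => W (e j : Fin n))
            (fun a => W (a : Fin n)) (fun j => rfl)
        rw [h1, hWsum, inner_zero_left]
      have hsplit : ⟪W (idx j0), x⟫ + ∑ j ∈ Finset.univ.erase j0, ⟪W (idx j), x⟫ = 0 := by
        have h3 := Finset.add_sum_erase Finset.univ (fun j => ⟪W (idx j), x⟫) (Finset.mem_univ j0)
        rw [hsum0] at h3
        exact h3
      have hupper : ⟪W (idx j0), x⟫ ≤ -(c j0) := hj j0
      have hlower : ∑ j ∈ Finset.univ.erase j0, c j ≤ ⟪W (idx j0), x⟫ := by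
        have h1 : ∑ j ∈ Finset.univ.erase j0, ⟪W (idx j), x⟫ ≤
            ∑ j ∈ Finset.univ.erase j0, (-(c j)) := Finset.sum_le_sum (fun j _ => hj j)
        have h2 : ∑ j ∈ Finset.univ.erase j0, (-(c j)) = -∑ j ∈ Finset.univ.erase j0, c j := by
          rw [Finset.sum_neg_distrib]
        rw [h2] at h1
        linarith
      have hinner : ⟪‖W (idx j0)‖⁻¹ • W (idx j0), x⟫ = ‖W (idx j0)‖⁻¹ * ⟪W (idx j0), x⟫ :=
        real_inner_smul_left _ _ _
      rw [hinner]
      have hnn : 0 ≤ ‖W (idx j0)‖⁻¹ := inv_nonneg.mpr hWpos.le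
      exact ⟨mul_le_mul_of_nonneg_left hlower hnn, mul_le_mul_of_nonneg_left hupper hnn⟩


/-- A finite set `F = {f 1, …, f n}` cannot be translated into the interior of a convex body
`C` if and only if there are closed supporting halfspaces `H⁺` of `C` (encoded by their
inward normal vectors `v j ≠ 0` and levels `c j`, so `H⁺ = {x | c j ≤ ⟪v j, x⟫}`) assigned
to some of the points, and a translation `t`, such that each translated point `t + f (idx j)`
lies in the complementary closed halfspace `H⁻ = {x | ⟪v j, x⟫ ≤ c j}`, and the intersection
of the halfspaces `H⁺` is nearly bounded. -/
theorem cannot_translate_into_interior_iff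
    {d n : ℕ} (hd : 2 ≤ d) (hn : 1 ≤ n) (f : Fin n → EuclideanSpace ℝ (Fin d))
    (C : Set (EuclideanSpace ℝ (Fin d)))
    (hCc : IsCompact C) (hCconv : Convex ℝ C) (hCint : (interior C).Nonempty) :
    (¬ ∃ t : EuclideanSpace ℝ (Fin d), ∀ i : Fin n, t + f i ∈ interior C) ↔
      ∃ (s : ℕ) (idx : Fin s → Fin n) (v : Fin s → EuclideanSpace ℝ (Fin d))
        (c : Fin s → ℝ) (t : EuclideanSpace ℝ (Fin d)),
        1 ≤ s ∧ StrictMono idx ∧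
        (∀ j, v j ≠ 0) ∧
        (∀ j, ∀ x ∈ C, c j ≤ ⟪v j, x⟫) ∧
        (∀ j, ∃ x ∈ C, ⟪v j, x⟫ = c j) ∧
        (∀ j, ⟪v j, t + f (idx j)⟫ ≤ c j) ∧
        NearlyBounded (⋂ j, {x : EuclideanSpace ℝ (Fin d) | c j ≤ ⟪v j, x⟫}) := by
  constructor
  · intro H
    exact forward_dir hd hn f C hCc hCconv hCint H
  · rintro ⟨s, idx, v, c, t, h1, h2, h3, h4, h5, h6, h7⟩
    exact backward_dir f C h1 h3 h4 h5 h6 h7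
end
end

section
/- Let p_1, …, p_n (n ≥ 2, indices mod n) be points in ℝ^d (d ≥ 2) with p_i ≠ p_{i+1} for all i, and suppose that for each i the vector u_i = (p_{i-1}−p_i)/‖p_{i-1}−p_i‖ + (p_{i+1}−p_i)/‖p_{i+1}−p_i‖ is nonzero; set v_i = u_i/‖u_i‖. Then the origin belongs to the convex hull of {v_1, …, v_n}. -/
open scoped RealInnerProductSpace

noncomputable section

/-- The (non-normalized) inner angle bisector direction of the closed polygonal path `p`
at the vertex `p i`. -/
def bisector {d : ℕ} (p : ℤ → EuclideanSpace ℝ (Fin d)) (i : ℤ) : EuclideanSpace ℝ (Fin d) :=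
  ‖p (i - 1) - p i‖⁻¹ • (p (i - 1) - p i) + ‖p (i + 1) - p i‖⁻¹ • (p (i + 1) - p i)

/-- For a closed polygonal path `p` (an `n`-periodic sequence of vertices, consecutive
vertices distinct) whose inner angle bisector directions are all nonzero, the origin lies in
the convex hull of the unit inner angle bisector vectors. -/
theorem origin_mem_convexHull_of_bisectors
    {d n : ℕ} (hd : 2 ≤ d) (hn : 2 ≤ n) (p : ℤ → EuclideanSpace ℝ (Fin d))
    (hper : ∀ i : ℤ, p (i + (n : ℤ)) = p i) (hne : ∀ i : ℤ, p i ≠ p (i + 1))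
    (hu : ∀ i : ℤ, bisector p i ≠ 0) :
    (0 : EuclideanSpace ℝ (Fin d)) ∈
      convexHull ℝ (Set.range fun i : ℤ => ‖bisector p i‖⁻¹ • bisector p i) := by
  by_contra h0
  set v : ℤ → EuclideanSpace ℝ (Fin d) := fun i => ‖bisector p i‖⁻¹ • bisector p i with hv
  have hnpos : (0:ℤ) < n := by exact_mod_cast Nat.lt_of_lt_of_le Nat.zero_lt_two hn
  have hbper : ∀ i : ℤ, bisector p (i + n) = bisector p i := by
    intro i
    unfold bisector
    rw [show i + (n:ℤ) - 1 = (i-1) + n by ring, show i + (n:ℤ) + 1 = (i+1) + n by ring,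
        hper, hper, hper]
  have hvper : ∀ i : ℤ, v (i + n) = v i := by
    intro i; simp only [hv, hbper]
  have hvmul : ∀ (i : ℤ) (m : ℤ), v (i + m * n) = v i := by
    intro i m
    induction m using Int.induction_on with
    | zero => simp
    | succ k ih => rw [show i + ((k:ℤ)+1) * n = (i + k * n) + n by ring, hvper, ih]
    | pred k ih =>
        have h := hvper (i + (-(k:ℤ)-1) * n)
        rw [show i + (-(k:ℤ)-1) * n + n = i + (-(k:ℤ)) * n by ring] at h
        exact h.symm.trans ih
  -- finiteness of the range of v
  have hfin : (Set.range v).Finite := by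
    have hsub : Set.range v ⊆ v '' (Set.Ico (0:ℤ) n) := by
      rintro x ⟨i, rfl⟩
      refine ⟨i % n, ⟨Int.emod_nonneg i hnpos.ne', Int.emod_lt_of_pos i hnpos⟩, ?_⟩
      have : v (i % n + (i / n) * n) = v (i % n) := hvmul _ _
      rw [show i % n + (i / n) * n = i by rw [mul_comm]; exact Int.emod_add_mul_ediv i n] at this
      exact this.symm
    exact ((Set.finite_Ico _ _).image v).subset hsub
  -- separation
  obtain ⟨f, c, hfc, hc0⟩ :=
    geometric_hahn_banach_closed_point (convex_convexHull ℝ _)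
      (hfin.isCompact_convexHull ℝ).isClosed h0
  rw [map_zero] at hc0
  have hfneg : ∀ i : ℤ, f (bisector p i) < 0 := by
    intro i
    have hmem : v i ∈ convexHull ℝ (Set.range v) :=
      subset_convexHull ℝ _ (Set.mem_range_self i)
    have h1 : f (v i) < 0 := lt_trans (hfc _ hmem) hc0
    have h2 : f (v i) = ‖bisector p i‖⁻¹ * f (bisector p i) := by
      simp [hv, map_smul]
    have hpos : 0 < ‖bisector p i‖⁻¹ := by
      rw [inv_pos]; exact norm_pos_iff.mpr (hu i)
    nlinarith [h1, h2, hpos]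
  -- edge unit vectors
  set e : ℤ → EuclideanSpace ℝ (Fin d) :=
    fun i => ‖p (i + 1) - p i‖⁻¹ • (p (i + 1) - p i) with he
  have hbis : ∀ i : ℤ, bisector p i = e i - e (i - 1) := by
    intro i
    simp only [he, bisector, show i - 1 + 1 = i by ring]
    rw [show p i - p (i-1) = -(p (i-1) - p i) by abel, norm_neg, smul_neg]
    abel
  set σ : ℤ → ℝ := fun i => f (e i) with hσ
  have hdec : ∀ i : ℤ, σ i < σ (i - 1) := by
    intro i
    have := hfneg i
    rw [hbis i, map_sub] at this
    simpa [hσ] using by linarith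
  have hkey : ∀ k : ℕ, σ ((k:ℤ) + 1) < σ 0 := by
    intro k
    induction k with
    | zero => simpa using hdec 1
    | succ m ih =>
        have h3 : ((m+1:ℕ):ℤ) + 1 = (m:ℤ) + 2 := by push_cast; ring
        rw [h3]
        have h2 : ((m:ℤ)+2) - 1 = (m:ℤ)+1 := by ring
        have h1' := hdec ((m:ℤ)+2)
        rw [h2] at h1'
        exact h1'.trans ih
  have heq : σ (n:ℤ) = σ 0 := by
    simp only [hσ, he]
    rw [show (n:ℤ)+1 = 1 + n by ring, hper 1, show ((n:ℤ)) = 0 + n by ring, hper 0]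
    norm_num
  have hlast := hkey (n-1)
  rw [show (((n-1:ℕ)):ℤ) + 1 = (n:ℤ) by push_cast [Nat.cast_sub (by omega : 1 ≤ n)]; ring] at hlast
  linarith
end
end

section
/- For every real number x with 0.7 < x < π/4, one has g(x) > 0.4, where g(x) = (cos x + cos x / cos 2x) − (1 + √(1 + cos²x / cos²2x − 2 cos²x / cos 2x)). (Note that cos 2x > 0 on this interval, so g is well defined, and the expression under the square root equals (cos x / cos 2x − cos x)² + sin²x ≥ 0.) -/
open Real

set_option maxHeartbeats 1000000 in
/-- For all `x` with `0.7 < x < π/4`, the function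
`g x = (cos x + cos x / cos (2x)) − (1 + √(1 + cos²x / cos²(2x) − 2 cos²x / cos (2x)))`
satisfies `g x > 0.4`. -/
theorem g_gt_of_mem_Ioo (x : ℝ) (hx₁ : (0.7 : ℝ) < x) (hx₂ : x < π / 4) :
    (0.4 : ℝ) <
      (Real.cos x + Real.cos x / Real.cos (2 * x)) -
        (1 + Real.sqrt (1 + Real.cos x ^ 2 / Real.cos (2 * x) ^ 2 -
          2 * (Real.cos x ^ 2 / Real.cos (2 * x)))) := by
  have hx0 : 0 < x := lt_trans (by norm_num) hx₁
  have hπ : (3.14 : ℝ) < π := by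
    have := Real.pi_gt_d6
    linarith
  set c := Real.cos x with hc_def
  set s := Real.sin x with hs_def
  set d := Real.cos (2 * x) with hd_def
  have hsc : s ^ 2 + c ^ 2 = 1 := Real.sin_sq_add_cos_sq x
  have hs : 0 < s := Real.sin_pos_of_pos_of_lt_pi hx0 (by linarith)
  have hd2 : d = 2 * c ^ 2 - 1 := Real.cos_two_mul x
  have hsqrt2 : (1.414 : ℝ) < Real.sqrt 2 := by
    nlinarith [Real.sq_sqrt (show (0:ℝ) ≤ 2 by norm_num), Real.sqrt_nonneg 2]
  have hcgt : (0.707 : ℝ) < c := by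
    have h1 : Real.cos (π / 4) < c :=
      Real.cos_lt_cos_of_nonneg_of_le_pi (le_of_lt hx0) (by linarith) hx₂
    rw [Real.cos_pi_div_four] at h1
    linarith
  have hc_pos : 0 < c := by linarith
  have hd_pos : 0 < d := by
    apply Real.cos_pos_of_mem_Ioo
    constructor <;> [linarith; linarith]
  have hc1 : c < 1 := by nlinarith
  have hd1 : d < 1 := by nlinarith
  set A := c / d - c with hA_def
  have hA : 0 < A := by
    have : c < c / d := by
      rw [lt_div_iff₀ hd_pos]; nlinarith
    simp only [hA_def]; linarith
  have hAsq : A ^ 2 = c ^ 2 / d ^ 2 - 2 * (c ^ 2 / d) + c ^ 2 := by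
    simp only [hA_def]
    field_simp
    ring
  have hR : 1 + c ^ 2 / d ^ 2 - 2 * (c ^ 2 / d) = A ^ 2 + s ^ 2 := by
    rw [hAsq]; linarith
  have h1d : 1 - d = 2 * s ^ 2 := by rw [hd2]; linarith
  have hkey : A * d / (2 * c) = s ^ 2 := by
    have hAd : A * d = c * (1 - d) := by
      simp only [hA_def]; field_simp
    rw [hAd, h1d]
    field_simp
  have hB : (0 : ℝ) ≤ A + d / (4 * c) := by positivity
  have hsqrt : Real.sqrt (1 + c ^ 2 / d ^ 2 - 2 * (c ^ 2 / d)) ≤ A + d / (4 * c) := by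
    have hle : 1 + c ^ 2 / d ^ 2 - 2 * (c ^ 2 / d) ≤ (A + d / (4 * c)) ^ 2 := by
      have hexp : (A + d / (4 * c)) ^ 2 = A ^ 2 + A * d / (2 * c) + d ^ 2 / (16 * c ^ 2) := by
        field_simp
        ring
      rw [hR, hexp, hkey]
      have : (0:ℝ) ≤ d ^ 2 / (16 * c ^ 2) := by positivity
      linarith
    calc Real.sqrt (1 + c ^ 2 / d ^ 2 - 2 * (c ^ 2 / d))
        ≤ Real.sqrt ((A + d / (4 * c)) ^ 2) := Real.sqrt_le_sqrt hle
      _ = A + d / (4 * c) := Real.sqrt_sq hB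
  have hfin : d / (4 * c) < 2 * c - 1.4 := by
    rw [hd2, div_lt_iff₀ (by positivity : (0:ℝ) < 4 * c)]
    nlinarith [sq_nonneg (c - 0.707), hcgt]
  have hAdef : A = c / d - c := rfl
  linarith
end
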